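/- Let ρ be a density operator with support projector Π_ρ and let Q = I − Π_ρ. Then the support of H ρ H is contained in the support of ρ if and only if Π_ρ commutes with H (equivalently, Q H Π_ρ = 0). -/

import Mathlib

open Matrix BigOperators
open scoped ComplexOrder

private lemma matrix_eq_of_mulVec {d : ℕ} {A B : Matrix (Fin d) (Fin d) ℂ}
    (h : ∀ x, A.mulVec x = B.mulVec x) : A = B := by
  apply Matrix.toLin'.injective
  refine LinearMap.ext fun x => ?_
  rw [Matrix.toLin'_apply, Matrix.toLin'_apply]
  exact h x

/-- The support of H ρ H is contained in the support of ρ iff the support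
projector P of ρ commutes with H, equivalently (I − P) H P = 0. -/
theorem support_HρH_subset_iff_commute {d : ℕ}
    (H ρ P : Matrix (Fin d) (Fin d) ℂ) (hH : H.IsHermitian)
    (hρ : ρ.PosSemidef)
    (hPherm : P.IsHermitian) (hPidem : P * P = P)
    (hPrange : LinearMap.range P.mulVecLin = LinearMap.range ρ.mulVecLin) :
    (LinearMap.range (H * ρ * H).mulVecLin ≤ LinearMap.range ρ.mulVecLin
        ↔ P * H = H * P) ∧
      (P * H = H * P ↔ (1 - P) * H * P = 0) := by
  -- P fixes the range of ρ, hence P * ρ = ρ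
  have hPρ : P * ρ = ρ := by
    apply matrix_eq_of_mulVec
    intro x
    have hmem : ρ.mulVec x ∈ LinearMap.range P.mulVecLin := by
      rw [hPrange]; exact ⟨x, rfl⟩
    obtain ⟨y, hy⟩ := hmem
    simp only [Matrix.mulVecLin_apply] at hy
    calc (P * ρ).mulVec x = P.mulVec (ρ.mulVec x) := by rw [← Matrix.mulVec_mulVec]
      _ = P.mulVec (P.mulVec y) := by rw [hy]
      _ = (P * P).mulVec y := by rw [Matrix.mulVec_mulVec]
      _ = P.mulVec y := by rw [hPidem]
      _ = ρ.mulVec x := hy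
  have hρP : ρ * P = ρ := by
    have := congrArg Matrix.conjTranspose hPρ
    rwa [Matrix.conjTranspose_mul, hρ.1, hPherm] at this
  -- second iff
  have hiff2 : P * H = H * P ↔ (1 - P) * H * P = 0 := by
    constructor
    · intro hc
      rw [sub_mul, one_mul, sub_mul, hc, mul_assoc, hPidem, sub_self]
    · intro h0
      rw [sub_mul, one_mul, sub_mul, sub_eq_zero] at h0
      -- h0 : H * P = P * H * P
      have h1 := congrArg Matrix.conjTranspose h0
      rw [Matrix.conjTranspose_mul, Matrix.conjTranspose_mul,
        Matrix.conjTranspose_mul, hH, hPherm] at h1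
      -- h1 : P * H = P * (P * H)... compute
      rw [← mul_assoc] at h1
      rw [h1, ← h0]
  refine ⟨?_, hiff2⟩
  rw [hiff2]
  constructor
  · intro hle
    -- P * (H*ρ*H) = H*ρ*H
    have hfix : P * (H * ρ * H) = H * ρ * H := by
      apply matrix_eq_of_mulVec
      intro x
      obtain ⟨y, hy⟩ := hle ⟨x, rfl⟩
      have hy' : ρ.mulVec y = (H * ρ * H).mulVec x := hy
      calc (P * (H * ρ * H)).mulVec x = P.mulVec ((H * ρ * H).mulVec x) := by
            rw [← Matrix.mulVec_mulVec]
        _ = P.mulVec (ρ.mulVec y) := by rw [hy']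
        _ = (P * ρ).mulVec y := by rw [Matrix.mulVec_mulVec]
        _ = ρ.mulVec y := by rw [hPρ]
        _ = (H * ρ * H).mulVec x := hy'
    have hQ : (1 - P) * (H * ρ * H) = 0 := by
      rw [sub_mul, one_mul, hfix, sub_self]
    set S := (open scoped MatrixOrder in CFC.sqrt ρ) with hS
    have hSherm : S.IsHermitian :=
      (open scoped MatrixOrder in (CFC.sqrt_nonneg ρ).posSemidef.1)
    have hSS : S * S = ρ :=
      (open scoped MatrixOrder in CFC.sqrt_mul_sqrt_self ρ hρ.nonneg)
    set A := (1 - P) * H * S with hA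
    have hAzero : A = 0 := by
      rw [← Matrix.self_mul_conjTranspose_eq_zero]
      have : A * Aᴴ = (1 - P) * (H * ρ * H) * (1 - P) := by
        have hQherm : (1 - P)ᴴ = 1 - P := by
          rw [Matrix.conjTranspose_sub, Matrix.conjTranspose_one, hPherm]
        rw [hA, Matrix.conjTranspose_mul, Matrix.conjTranspose_mul, hQherm, hSherm, hH,
          ← hSS]
        noncomm_ring
      rw [this, hQ, zero_mul]
    have hQHρ : (1 - P) * H * ρ = 0 := by
      rw [← hSS, ← mul_assoc, ← hA, hAzero, zero_mul]
    -- from QHρ = 0 deduce QHP = 0 using range P = range ρ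
    apply matrix_eq_of_mulVec
    intro x
    have hmem : P.mulVec x ∈ LinearMap.range ρ.mulVecLin := by
      rw [← hPrange]; exact ⟨x, rfl⟩
    obtain ⟨y, hy⟩ := hmem
    have hy' : ρ.mulVec y = P.mulVec x := hy
    calc ((1 - P) * H * P).mulVec x = ((1 - P) * H).mulVec (P.mulVec x) := by
          rw [Matrix.mulVec_mulVec]
      _ = ((1 - P) * H).mulVec (ρ.mulVec y) := by rw [hy']
      _ = ((1 - P) * H * ρ).mulVec y := by rw [Matrix.mulVec_mulVec]
      _ = (0 : Matrix (Fin d) (Fin d) ℂ).mulVec y := by rw [hQHρ]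
      _ = (0 : Matrix (Fin d) (Fin d) ℂ).mulVec x := by simp
  · intro h0
    have hHP : H * P = P * (H * P) := by
      rw [sub_mul, one_mul, sub_mul, sub_eq_zero] at h0
      rw [← mul_assoc, ← h0]
    have hfix : P * (H * ρ * H) = H * ρ * H := by
      calc P * (H * ρ * H) = P * (H * (P * ρ) * H) := by rw [hPρ]
        _ = (P * (H * P)) * ρ * H := by noncomm_ring
        _ = (H * P) * ρ * H := by rw [← hHP]
        _ = H * (P * ρ) * H := by noncomm_ring
        _ = H * ρ * H := by rw [hPρ]
    rintro v ⟨x, rfl⟩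
    rw [← hPrange]
    refine ⟨(H * ρ * H).mulVec x, ?_⟩
    simp only [Matrix.mulVecLin_apply, Matrix.mulVec_mulVec, hfix]
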